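/- arXiv:2409.12502 — 2 statements merged into one kernel-verified Lean document; each statement's English description precedes it below -/
import Mathlib

section
/- Let (μ_n)_{n∈ℕ} be a sequence in 𝐌 and μ_∞ ∈ 𝐌. The following are equivalent: (i) W₁(μ_n, μ_∞) → 0; (ii) L_{μ_n} → L_{μ_∞} pointwise on [0,1] and m_{μ_n} → m_{μ_∞}; (iii) L_{μ_n} → L_{μ_∞} uniformly on [0,1] and m_{μ_n} → m_{μ_∞}. -/
open MeasureTheory Filter Topology

noncomputable section

/-- The mean of a measure on `ℝ`. -/
def mMean (μ : Measure ℝ) : ℝ := ∫ x, x ∂μ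

/-- `μ ∈ 𝐌`: a Borel probability measure on `ℝ₊` (modelled as a measure on `ℝ` giving no
mass to negative numbers) with finite nonzero mean. -/
def MemM (μ : Measure ℝ) : Prop :=
  IsProbabilityMeasure μ ∧ μ {x | x < 0} = 0 ∧ Integrable id μ ∧ 0 < mMean μ

/-- The cumulative distribution function `F_μ(x) = μ([0,x])`. -/
def cdfR (μ : Measure ℝ) (x : ℝ) : ℝ := (μ (Set.Icc 0 x)).toReal

/-- The quantile function `Q_μ(p) = inf {x ∈ ℝ₊ : F_μ(x) ≥ p}`. -/
def quant (μ : Measure ℝ) (p : ℝ) : ℝ := sInf {x : ℝ | 0 ≤ x ∧ p ≤ cdfR μ x}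

/-- The Lorenz function `L_μ(p) = (∫_0^p Q_μ(t) dt) / m_μ`. -/
def lorenz (μ : Measure ℝ) (p : ℝ) : ℝ := (∫ t in (0:ℝ)..p, quant μ t) / mMean μ

/-- The pseudo-Lorenz function `Λ_μ(p) = (∫_{[0,Q_μ(p)]} u dμ(u)) / m_μ` for `p ∈ [0,1)`,
with `Λ_μ(1) = 1`. -/
def pseudoLorenz (μ : Measure ℝ) (p : ℝ) : ℝ :=
  if p = 1 then 1 else (∫ u in Set.Icc (0:ℝ) (quant μ p), u ∂μ) / mMean μ

/-- The Gini coefficient `G(μ) = (∫∫ |x-y| d(μ⊗μ)) / (2 m_μ)`. -/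
def gini (μ : Measure ℝ) : ℝ := (∫ z : ℝ × ℝ, |z.1 - z.2| ∂(μ.prod μ)) / (2 * mMean μ)

/-- The Hoover coefficient `H(μ) = (∫ |x - m_μ| dμ) / (2 m_μ)`. -/
def hoover (μ : Measure ℝ) : ℝ := (∫ x, |x - mMean μ| ∂μ) / (2 * mMean μ)

/-- The Wasserstein-1 distance `W₁(μ,ν) = ∫_0^1 |Q_μ - Q_ν|`. -/
def W1 (μ ν : Measure ℝ) : ℝ := ∫ t in (0:ℝ)..1, |quant μ t - quant ν t|

/-- Weak convergence of a sequence of measures: convergence of integrals of all bounded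
continuous functions. -/
def WeakCv (μs : ℕ → Measure ℝ) (ν : Measure ℝ) : Prop :=
  ∀ f : ℝ → ℝ, Continuous f → (∃ C : ℝ, ∀ x, |f x| ≤ C) →
    Tendsto (fun n => ∫ x, f x ∂(μs n)) atTop (𝓝 (∫ x, f x ∂ν))

/-- Uniform integrability of a family of measures on `ℝ₊`:
`sup_i ∫_{(α,∞)} x dμ_i(x) → 0` as `α → +∞`. -/
def UnifInt {ι : Type*} (μs : ι → Measure ℝ) : Prop :=
  ∀ ε > (0:ℝ), ∃ A : ℝ, ∀ α ≥ A, ∀ i, (∫ x in Set.Ioi α, x ∂(μs i)) ≤ ε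

end


open Set

section Aux
variable {μ : Measure ℝ}

lemma cdf_nonneg (x : ℝ) : 0 ≤ cdfR μ x := ENNReal.toReal_nonneg

lemma cdf_mono [IsProbabilityMeasure μ] : Monotone (cdfR μ) := fun x y hxy =>
  ENNReal.toReal_mono (measure_ne_top _ _) (measure_mono (Icc_subset_Icc le_rfl hxy))

lemma cdf_le_one [IsProbabilityMeasure μ] (x : ℝ) : cdfR μ x ≤ 1 := by
  have := prob_le_one (μ := μ) (s := Icc 0 x)
  simpa [cdfR] using ENNReal.toReal_mono ENNReal.one_ne_top this

lemma quant_nonneg (p : ℝ) : 0 ≤ quant μ p := Real.sInf_nonneg (fun x hx => hx.1)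

lemma bddBelow_S (p : ℝ) : BddBelow {x : ℝ | 0 ≤ x ∧ p ≤ cdfR μ x} :=
  ⟨0, fun x hx => hx.1⟩

lemma tendsto_cdf_right [IsProbabilityMeasure μ] (x : ℝ) :
    Tendsto (fun k : ℕ => cdfR μ (x + 1/(k+1))) atTop (𝓝 (cdfR μ x)) := by
  have h1 : Tendsto (fun k : ℕ => μ (Icc 0 (x + 1/(k+1)))) atTop (𝓝 (μ (⋂ k : ℕ, Icc 0 (x + 1/(k+1))))) := by
    apply tendsto_measure_iInter_atTop
    · exact fun k => (measurableSet_Icc).nullMeasurableSet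
    · intro i j hij
      apply Icc_subset_Icc le_rfl
      have : (i:ℝ) ≤ (j:ℝ) := by exact_mod_cast hij
      gcongr
    · exact ⟨0, measure_ne_top _ _⟩
  have h2 : (⋂ k : ℕ, Icc 0 (x + 1/(k+1))) = Icc 0 x := by
    ext y
    simp only [mem_iInter, mem_Icc]
    constructor
    · rintro h
      refine ⟨(h 0).1, ?_⟩
      by_contra hy
      push_neg at hy
      obtain ⟨n, hn⟩ := exists_nat_one_div_lt (sub_pos.mpr hy)
      have := (h n).2
      linarith
    · rintro ⟨h0, h1⟩ k
      refine ⟨h0, h1.trans (le_add_of_nonneg_right (by positivity))⟩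
  rw [h2] at h1
  exact (ENNReal.tendsto_toReal (measure_ne_top _ _)).comp h1

lemma mem_S_quant [IsProbabilityMeasure μ] {p : ℝ}
    (hne : {x : ℝ | 0 ≤ x ∧ p ≤ cdfR μ x}.Nonempty) :
    0 ≤ quant μ p ∧ p ≤ cdfR μ (quant μ p) := by
  refine ⟨quant_nonneg p, ?_⟩
  set S := {x : ℝ | 0 ≤ x ∧ p ≤ cdfR μ x} with hS
  have hbdd : BddBelow S := bddBelow_S p
  have key : ∀ k : ℕ, p ≤ cdfR μ (quant μ p + 1/(k+1)) := by
    intro k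
    have hpos : (0:ℝ) < 1/(k+1) := by positivity
    have hlt : sInf S < sInf S + 1/(k+1) := by linarith
    obtain ⟨y, hy, hylt⟩ := (csInf_lt_iff hbdd hne).mp hlt
    exact hy.2.trans (cdf_mono hylt.le)
  exact ge_of_tendsto (tendsto_cdf_right (quant μ p)) (Eventually.of_forall key)

end Aux

section Aux2
variable {μ : Measure ℝ}

lemma S_nonempty (hμ : MemM μ) {p : ℝ} (hp : p < 1) :
    {x : ℝ | 0 ≤ x ∧ p ≤ cdfR μ x}.Nonempty := by
  haveI := hμ.1
  have hU : (⋃ n : ℕ, Icc (0:ℝ) n) = Ici 0 := by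
    ext y
    simp only [mem_iUnion, mem_Icc, mem_Ici]
    constructor
    · rintro ⟨n, h0, _⟩; exact h0
    · intro h0
      obtain ⟨n, hn⟩ := exists_nat_ge y
      exact ⟨n, h0, hn⟩
  have hIci : μ (Ici 0) = 1 := by
    have hc : μ (Ici (0:ℝ))ᶜ = 0 := by
      rw [compl_Ici]
      simpa [Iio, Set.ext_iff] using hμ.2.1
    have := measure_add_measure_compl (μ := μ) (measurableSet_Ici (a := (0:ℝ)))
    rw [hc, add_zero] at this
    simpa using this
  have h1 : Tendsto (fun n : ℕ => μ (Icc (0:ℝ) n)) atTop (𝓝 1) := by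
    have := tendsto_measure_iUnion_atTop (μ := μ)
      (s := fun n : ℕ => Icc (0:ℝ) n) (fun i j hij => Icc_subset_Icc le_rfl (by exact_mod_cast hij))
    rw [hU, hIci] at this
    exact this
  have h2 : Tendsto (fun n : ℕ => cdfR μ n) atTop (𝓝 1) := by
    have := (ENNReal.tendsto_toReal ENNReal.one_ne_top).comp h1
    exact this
  have := (h2.eventually (eventually_gt_nhds hp)).exists
  obtain ⟨n, hn⟩ := this
  exact ⟨n, Nat.cast_nonneg n, hn.le⟩

lemma quant_le_iff (hμ : MemM μ) {p s : ℝ} (hp : p < 1) (hs : 0 ≤ s) :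
    quant μ p ≤ s ↔ p ≤ cdfR μ s := by
  haveI := hμ.1
  constructor
  · intro hle
    exact ((mem_S_quant (S_nonempty hμ hp)).2).trans (cdf_mono hle)
  · intro hF
    exact csInf_le (bddBelow_S p) ⟨hs, hF⟩

lemma quant_mono (hμ : MemM μ) {p q : ℝ} (hpq : p ≤ q) (hq : q < 1) :
    quant μ p ≤ quant μ q := by
  haveI := hμ.1
  obtain ⟨h0, hF⟩ := mem_S_quant (S_nonempty hμ hq)
  exact csInf_le (bddBelow_S p) ⟨h0, hpq.trans hF⟩

lemma quant_monoOn (hμ : MemM μ) : MonotoneOn (quant μ) (Ioo (0:ℝ) 1) :=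
  fun _ _ _ hy hxy => quant_mono hμ hxy hy.2

lemma quant_aemeasurable (hμ : MemM μ) :
    AEMeasurable (quant μ) (volume.restrict (Ioo (0:ℝ) 1)) :=
  aemeasurable_restrict_of_monotoneOn measurableSet_Ioo (quant_monoOn hμ)

end Aux2

section Aux3
variable {μ : Measure ℝ}

lemma measure_Ioi_eq (hμ : MemM μ) {s : ℝ} (hs : 0 ≤ s) :
    μ (Ioi s) = ENNReal.ofReal (1 - cdfR μ s) := by
  haveI := hμ.1
  have hd : Disjoint (Icc (0:ℝ) s) (Ioi s) := by
    rw [Set.disjoint_left]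
    rintro x ⟨_, hx2⟩ hx3
    exact absurd hx3 (not_lt.mpr hx2)
  have hu : Icc (0:ℝ) s ∪ Ioi s = Ici 0 := Icc_union_Ioi_eq_Ici hs
  have hIci : μ (Ici 0) = 1 := by
    have hc : μ (Ici (0:ℝ))ᶜ = 0 := by
      rw [compl_Ici]
      simpa [Iio, Set.ext_iff] using hμ.2.1
    have := measure_add_measure_compl (μ := μ) (measurableSet_Ici (a := (0:ℝ)))
    rw [hc, add_zero] at this
    simpa using this
  have hadd : μ (Icc 0 s) + μ (Ioi s) = 1 := by
    rw [← measure_union hd measurableSet_Ioi, hu, hIci]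
  have h1 : μ (Ioi s) = 1 - μ (Icc 0 s) := by
    rw [← hadd]
    exact (ENNReal.add_sub_cancel_left (measure_ne_top _ _)).symm
  rw [h1, ENNReal.ofReal_sub _ (cdf_nonneg s), ENNReal.ofReal_one, cdfR,
    ENNReal.ofReal_toReal (measure_ne_top _ _)]

lemma lint_mu (hμ : MemM μ) :
    ∫⁻ x, ENNReal.ofReal x ∂μ = ∫⁻ s in Ioi (0:ℝ), ENNReal.ofReal (1 - cdfR μ s) := by
  haveI := hμ.1
  have hnn : 0 ≤ᵐ[μ] (id : ℝ → ℝ) := by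
    have : ∀ᵐ x ∂μ, ¬ (x < 0) := by
      rw [ae_iff]; simpa using hμ.2.1
    filter_upwards [this] with x hx
    exact not_lt.mp hx
  have hrw := lintegral_eq_lintegral_meas_lt μ hnn aemeasurable_id
  simp only [id_eq] at hrw
  rw [hrw]
  apply setLIntegral_congr_fun measurableSet_Ioi
  intro s hs
  show μ (Ioi s) = ENNReal.ofReal (1 - cdfR μ s)
  exact measure_Ioi_eq hμ (le_of_lt hs)

lemma lint_quant (hμ : MemM μ) :
    ∫⁻ t in Ioo (0:ℝ) 1, ENNReal.ofReal (quant μ t) =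
      ∫⁻ s in Ioi (0:ℝ), ENNReal.ofReal (1 - cdfR μ s) := by
  haveI := hμ.1
  rw [lintegral_eq_lintegral_meas_lt (volume.restrict (Ioo (0:ℝ) 1))
    (Eventually.of_forall (fun t => quant_nonneg t)) (quant_aemeasurable hμ)]
  apply setLIntegral_congr_fun measurableSet_Ioi
  intro s hs
  beta_reduce
  rw [Measure.restrict_apply' measurableSet_Ioo]
  have hset : {a : ℝ | s < quant μ a} ∩ Ioo 0 1 = Ioo (cdfR μ s) 1 := by
    ext t
    simp only [mem_inter_iff, mem_setOf_eq, mem_Ioo]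
    constructor
    · rintro ⟨hlt, ht0, ht1⟩
      refine ⟨?_, ht1⟩
      by_contra hc
      push_neg at hc
      have := (quant_le_iff hμ ht1 hs.le).mpr hc
      exact absurd this (not_le.mpr hlt)
    · rintro ⟨hFt, ht1⟩
      have ht0 : 0 < t := lt_of_le_of_lt (cdf_nonneg s) hFt
      refine ⟨?_, ht0, ht1⟩
      by_contra hc
      push_neg at hc
      have := (quant_le_iff hμ ht1 hs.le).mp hc
      exact absurd this (not_le.mpr hFt)
  rw [hset, Real.volume_Ioo]

lemma lint_quant_eq_mean (hμ : MemM μ) :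
    ∫⁻ t in Ioo (0:ℝ) 1, ENNReal.ofReal (quant μ t) = ENNReal.ofReal (mMean μ) := by
  rw [lint_quant hμ, ← lint_mu hμ]
  have hnn : 0 ≤ᵐ[μ] (id : ℝ → ℝ) := by
    have : ∀ᵐ x ∂μ, ¬ (x < 0) := by
      rw [ae_iff]; simpa using hμ.2.1
    filter_upwards [this] with x hx
    exact not_lt.mp hx
  have hint := integral_eq_lintegral_of_nonneg_ae hnn hμ.2.2.1.aestronglyMeasurable
  simp only [id_eq] at hint
  have hfin : ∫⁻ x, ENNReal.ofReal x ∂μ ≠ ⊤ := by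
    have hb : ∫⁻ x, (‖x‖₊ : ENNReal) ∂μ < ⊤ := hμ.2.2.1.hasFiniteIntegral
    refine ne_top_of_le_ne_top hb.ne ?_
    exact lintegral_mono fun x => Real.ofReal_le_enorm x
  show _ = ENNReal.ofReal (∫ x, x ∂μ)
  rw [hint, ENNReal.ofReal_toReal hfin]

lemma quant_integrableOn (hμ : MemM μ) :
    IntegrableOn (quant μ) (Ioo (0:ℝ) 1) := by
  refine ⟨(quant_aemeasurable hμ).aestronglyMeasurable, ?_⟩
  show (∫⁻ t in Ioo (0:ℝ) 1, (‖quant μ t‖₊ : ENNReal)) < ⊤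
  have : ∀ t, (‖quant μ t‖₊ : ENNReal) = ENNReal.ofReal (quant μ t) :=
    fun t => Real.enorm_eq_ofReal (quant_nonneg t)
  rw [lintegral_congr (fun t => this t), lint_quant_eq_mean hμ]
  exact ENNReal.ofReal_lt_top

lemma setIntegral_quant_eq_mean (hμ : MemM μ) :
    ∫ t in Ioo (0:ℝ) 1, quant μ t = mMean μ := by
  rw [integral_eq_lintegral_of_nonneg_ae (Eventually.of_forall (fun t => quant_nonneg t))
    (quant_aemeasurable hμ).aestronglyMeasurable, lint_quant_eq_mean hμ,
    ENNReal.toReal_ofReal hμ.2.2.2.le]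

lemma intervalIntegral_quant_eq (hμ : MemM μ) {p : ℝ} (hp0 : 0 ≤ p) :
    ∫ t in (0:ℝ)..p, quant μ t = ∫ t in Ioo (0:ℝ) p, quant μ t := by
  rw [intervalIntegral.integral_of_le hp0, integral_Ioc_eq_integral_Ioo]

end Aux3

section Aux4
variable {μ ν : Measure ℝ}

lemma quant_integrableOn_sub (hμ : MemM μ) {a b : ℝ} (ha : 0 ≤ a) (hb : b ≤ 1) :
    IntegrableOn (quant μ) (Ioo a b) :=
  (quant_integrableOn hμ).mono_set (Ioo_subset_Ioo ha hb) |>.congr_set_ae (by rfl)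

lemma quant_intervalIntegrable (hμ : MemM μ) {a b : ℝ} (ha : 0 ≤ a) (hab : a ≤ b) (hb : b ≤ 1) :
    IntervalIntegrable (quant μ) volume a b := by
  rw [intervalIntegrable_iff_integrableOn_Ioo_of_le hab]
  exact (quant_integrableOn hμ).mono_set (Ioo_subset_Ioo ha hb)

lemma W1_eq_setIntegral (μ ν : Measure ℝ) :
    W1 μ ν = ∫ t in Ioo (0:ℝ) 1, |quant μ t - quant ν t| := by
  rw [W1, intervalIntegral.integral_of_le zero_le_one, integral_Ioc_eq_integral_Ioo]

lemma W1_nonneg (μ ν : Measure ℝ) : 0 ≤ W1 μ ν := by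
  rw [W1_eq_setIntegral]
  exact setIntegral_nonneg measurableSet_Ioo (fun t _ => abs_nonneg _)

lemma abs_setIntegral_quant_sub_le (hμ : MemM μ) (hν : MemM ν) {p : ℝ} (hp0 : 0 ≤ p)
    (hp1 : p ≤ 1) :
    |(∫ t in Ioo (0:ℝ) p, quant μ t) - ∫ t in Ioo (0:ℝ) p, quant ν t| ≤ W1 μ ν := by
  have hIμ : IntegrableOn (quant μ) (Ioo (0:ℝ) p) := quant_integrableOn_sub hμ le_rfl hp1
  have hIν : IntegrableOn (quant ν) (Ioo (0:ℝ) p) := quant_integrableOn_sub hν le_rfl hp1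
  rw [← integral_sub hIμ hIν, W1_eq_setIntegral]
  have h1 : |∫ t in Ioo (0:ℝ) p, (quant μ t - quant ν t)| ≤
      ∫ t in Ioo (0:ℝ) p, |quant μ t - quant ν t| := by
    simpa [Real.norm_eq_abs] using
      norm_integral_le_integral_norm (μ := volume.restrict (Ioo (0:ℝ) p))
        (f := fun t => quant μ t - quant ν t)
  refine h1.trans ?_
  apply setIntegral_mono_set
  · exact ((quant_integrableOn hμ).sub (quant_integrableOn hν)).abs
  · exact Eventually.of_forall (fun t => abs_nonneg _)
  · exact HasSubset.Subset.eventuallyLE (Ioo_subset_Ioo le_rfl hp1)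

lemma abs_mean_sub_le (hμ : MemM μ) (hν : MemM ν) : |mMean μ - mMean ν| ≤ W1 μ ν := by
  have := abs_setIntegral_quant_sub_le hμ hν (p := 1) zero_le_one le_rfl
  rwa [setIntegral_quant_eq_mean hμ, setIntegral_quant_eq_mean hν] at this

end Aux4

section Aux5
variable {μ ν : Measure ℝ}

lemma aux_div {m mn a an w : ℝ} (hm : 0 < m) (hmn : m/2 ≤ mn) (ha0 : 0 ≤ a) (ha : a ≤ m)
    (h1 : |an - a| ≤ w) (h2 : |mn - m| ≤ w) : |an/mn - a/m| ≤ 4*w/m := by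
  have hmn0 : 0 < mn := lt_of_lt_of_le (by linarith) hmn
  have hw : 0 ≤ w := (abs_nonneg _).trans h1
  have key : an/mn - a/m = ((an - a)*m + a*(m - mn))/(mn*m) := by
    field_simp
    ring
  rw [key, abs_div, abs_of_pos (mul_pos hmn0 hm)]
  have hnum : |(an - a)*m + a*(m - mn)| ≤ 2*w*m := by
    have e1 : |(an - a)*m| ≤ w*m := by
      rw [abs_mul, abs_of_pos hm]
      exact mul_le_mul_of_nonneg_right h1 hm.le
    have e2 : |a*(m - mn)| ≤ m*w := by
      rw [abs_mul, abs_of_nonneg ha0, abs_sub_comm]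
      exact mul_le_mul ha h2 (abs_nonneg _) hm.le
    calc |(an - a)*m + a*(m - mn)| ≤ |(an - a)*m| + |a*(m - mn)| := abs_add_le _ _
      _ ≤ w*m + m*w := add_le_add e1 e2
      _ = 2*w*m := by ring
  have hd : m/2*m ≤ mn*m := mul_le_mul_of_nonneg_right hmn hm.le
  have hd0 : 0 < m/2*m := by positivity
  calc |(an - a)*m + a*(m - mn)| / (mn*m) ≤ (2*w*m) / (m/2*m) :=
        div_le_div₀ (by positivity) hnum hd0 hd
    _ = 4*w/m := by
        field_simp
        ring

lemma lorenz_eq_set (hμ : MemM μ) {p : ℝ} (hp0 : 0 ≤ p) :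
    lorenz μ p = (∫ t in Ioo (0:ℝ) p, quant μ t) / mMean μ := by
  rw [lorenz, intervalIntegral_quant_eq hμ hp0]

lemma setIntegral_quant_nonneg (μ : Measure ℝ) (p : ℝ) :
    0 ≤ ∫ t in Ioo (0:ℝ) p, quant μ t :=
  setIntegral_nonneg measurableSet_Ioo (fun t _ => quant_nonneg t)

lemma setIntegral_quant_le_mean (hμ : MemM μ) {p : ℝ} (hp1 : p ≤ 1) :
    (∫ t in Ioo (0:ℝ) p, quant μ t) ≤ mMean μ := by
  rw [← setIntegral_quant_eq_mean hμ]
  apply setIntegral_mono_set (quant_integrableOn hμ)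
    (Eventually.of_forall (fun t => quant_nonneg t))
    (HasSubset.Subset.eventuallyLE (Ioo_subset_Ioo le_rfl hp1))

theorem W1_to_means (μs : ℕ → Measure ℝ) (ν : Measure ℝ) (h : ∀ n, MemM (μs n)) (hν : MemM ν)
    (hw : Tendsto (fun n => W1 (μs n) ν) atTop (𝓝 0)) :
    Tendsto (fun n => mMean (μs n)) atTop (𝓝 (mMean ν)) := by
  have habs : Tendsto (fun n => |mMean (μs n) - mMean ν|) atTop (𝓝 0) :=
    squeeze_zero (fun n => abs_nonneg _) (fun n => abs_mean_sub_le (h n) hν) hw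
  rw [tendsto_iff_dist_tendsto_zero]
  simpa [Real.dist_eq] using habs

theorem W1_to_uniform (μs : ℕ → Measure ℝ) (ν : Measure ℝ) (h : ∀ n, MemM (μs n)) (hν : MemM ν)
    (hw : Tendsto (fun n => W1 (μs n) ν) atTop (𝓝 0)) :
    TendstoUniformlyOn (fun n p => lorenz (μs n) p) (lorenz ν) atTop (Icc 0 1) := by
  have hm : 0 < mMean ν := hν.2.2.2
  set m := mMean ν with hmdef
  rw [Metric.tendstoUniformlyOn_iff]
  intro ε hε
  have hc : (0:ℝ) < min (m/2) (ε*m/8) := lt_min (by positivity) (by positivity)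
  filter_upwards [hw.eventually_lt_const hc] with n hn
  intro p hp
  obtain ⟨hp0, hp1⟩ := hp
  have hWn : 0 ≤ W1 (μs n) ν := W1_nonneg _ _
  have hd1 : |(∫ t in Ioo (0:ℝ) p, quant (μs n) t) - ∫ t in Ioo (0:ℝ) p, quant ν t|
      ≤ W1 (μs n) ν := abs_setIntegral_quant_sub_le (h n) hν hp0 hp1
  have hd2 : |mMean (μs n) - m| ≤ W1 (μs n) ν := abs_mean_sub_le (h n) hν
  have hmn : m/2 ≤ mMean (μs n) := by
    have := abs_le.mp hd2
    have h2 := lt_of_le_of_lt hd2 (lt_of_lt_of_le hn (min_le_left _ _))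
    have := abs_le.mp h2.le
    linarith [this.1]
  have hbound := aux_div hm hmn (setIntegral_quant_nonneg ν p)
    (setIntegral_quant_le_mean hν hp1) hd1 hd2
  rw [Real.dist_eq, lorenz_eq_set (h n) hp0, lorenz_eq_set hν hp0, ← hmdef, abs_sub_comm]
  refine lt_of_le_of_lt hbound ?_
  have hlt : W1 (μs n) ν < ε*m/8 := lt_of_lt_of_le hn (min_le_right _ _)
  rw [div_lt_iff₀ hm]
  nlinarith

end Aux5

section Aux6

theorem lorenz_to_A (μs : ℕ → Measure ℝ) (ν : Measure ℝ) (h : ∀ n, MemM (μs n)) (hν : MemM ν)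
    (hlor : ∀ p ∈ Icc (0:ℝ) 1, Tendsto (fun n => lorenz (μs n) p) atTop (𝓝 (lorenz ν p)))
    (hmean : Tendsto (fun n => mMean (μs n)) atTop (𝓝 (mMean ν))) :
    ∀ p ∈ Icc (0:ℝ) 1, Tendsto (fun n => ∫ t in (0:ℝ)..p, quant (μs n) t) atTop
      (𝓝 (∫ t in (0:ℝ)..p, quant ν t)) := by
  intro p hp
  have key : ∀ n, ∫ t in (0:ℝ)..p, quant (μs n) t = lorenz (μs n) p * mMean (μs n) := by
    intro n
    rw [lorenz, div_mul_cancel₀ _ (ne_of_gt (h n).2.2.2)]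
  have keyν : ∫ t in (0:ℝ)..p, quant ν t = lorenz ν p * mMean ν := by
    rw [lorenz, div_mul_cancel₀ _ (ne_of_gt hν.2.2.2)]
  rw [keyν]
  have := (hlor p hp).mul hmean
  simpa [← key] using this

set_option maxHeartbeats 1000000 in
theorem quant_tendsto_ae (μs : ℕ → Measure ℝ) (ν : Measure ℝ) (h : ∀ n, MemM (μs n)) (hν : MemM ν)
    (hA : ∀ p ∈ Icc (0:ℝ) 1, Tendsto (fun n => ∫ t in (0:ℝ)..p, quant (μs n) t) atTop
      (𝓝 (∫ t in (0:ℝ)..p, quant ν t))) :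
    ∀ᵐ t ∂(volume.restrict (Ioo (0:ℝ) 1)),
      Tendsto (fun n => quant (μs n) t) atTop (𝓝 (quant ν t)) := by
  set Qk : ℕ → ℝ → ℝ := fun k t => quant ν (min t (1 - 1/(k+2))) with hQk
  have hck : ∀ k : ℕ, (1 : ℝ) - 1/(k+2) < 1 := by
    intro k
    have : (0:ℝ) < 1/(k+2) := by positivity
    linarith
  have hQkmono : ∀ k, Monotone (Qk k) := by
    intro k t t' htt'
    exact quant_mono hν (min_le_min htt' le_rfl) (lt_of_le_of_lt (min_le_right _ _) (hck k))
  set B : Set ℝ := ⋃ k : ℕ, {x | ¬ContinuousAt (Qk k) x} with hB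
  have hBcount : B.Countable :=
    countable_iUnion (fun k => (hQkmono k).countable_not_continuousAt)
  have hBnull : volume B = 0 := hBcount.measure_zero _
  rw [ae_restrict_iff' measurableSet_Ioo]
  have hae : ∀ᵐ t ∂(volume : Measure ℝ), t ∉ B := by
    rw [ae_iff]
    simpa using hBnull
  filter_upwards [hae] with t htB ht
  obtain ⟨ht0, ht1⟩ := ht
  rw [Metric.tendsto_nhds]
  intro ε hε
  obtain ⟨k, hk⟩ := exists_nat_one_div_lt (sub_pos.mpr ht1)
  obtain ⟨c, hc⟩ : ∃ c : ℝ, c = 1 - 1/((k:ℝ)+2) := ⟨_, rfl⟩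
  have hck2 : (1:ℝ)/(k+2) < 1/(k+1) := by
    apply div_lt_div_of_pos_left one_pos (by positivity)
    push_cast
    linarith
  have htc : t < c := by rw [hc]; linarith
  have hc1 : c < 1 := by rw [hc]; exact hck k
  have hcont : ContinuousAt (Qk k) t := by
    by_contra hcon
    exact htB (mem_iUnion.mpr ⟨k, hcon⟩)
  rw [Metric.continuousAt_iff] at hcont
  obtain ⟨δ, hδ, hδball⟩ := hcont (ε/4) (by positivity)
  obtain ⟨h0, hh0⟩ : ∃ h0 : ℝ, h0 = min (δ/2) (min (t/2) ((c - t)/2)) := ⟨_, rfl⟩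
  have hh : 0 < h0 := by
    rw [hh0]
    exact lt_min (by positivity) (lt_min (by positivity) (by linarith))
  have hhδ2 : h0 ≤ δ/2 := by rw [hh0]; exact min_le_left _ _
  have hht2 : h0 ≤ t/2 := by rw [hh0]; exact le_trans (min_le_right _ _) (min_le_left _ _)
  have hhc2 : h0 ≤ (c - t)/2 := by rw [hh0]; exact le_trans (min_le_right _ _) (min_le_right _ _)
  obtain ⟨u, hu⟩ : ∃ u : ℝ, u = t + h0 := ⟨_, rfl⟩
  obtain ⟨l, hl⟩ : ∃ l : ℝ, l = t - h0 := ⟨_, rfl⟩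
  have hl0 : 0 < l := by rw [hl]; linarith
  have hu1 : u < c := by rw [hu]; linarith
  have huc1 : u < 1 := lt_trans hu1 hc1
  have hlc : l ≤ c := by rw [hl]; linarith
  have hQkt : Qk k t = quant ν t := by
    have h1 : Qk k t = quant ν (min t (1 - 1/((k:ℝ)+2))) := rfl
    rw [h1, ← hc, min_eq_left htc.le]
  have hQku : Qk k u = quant ν u := by
    have h1 : Qk k u = quant ν (min u (1 - 1/((k:ℝ)+2))) := rfl
    rw [h1, ← hc, min_eq_left hu1.le]
  have hQkl : Qk k l = quant ν l := by
    have h1 : Qk k l = quant ν (min l (1 - 1/((k:ℝ)+2))) := rfl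
    rw [h1, ← hc, min_eq_left hlc]
  have hδh : h0 < δ := by linarith
  have hQu : |quant ν u - quant ν t| < ε/4 := by
    have hd : dist u t < δ := by
      rw [Real.dist_eq, hu, show t + h0 - t = h0 by ring, abs_of_pos hh]
      exact hδh
    have := hδball hd
    rwa [Real.dist_eq, hQku, hQkt] at this
  have hQl : |quant ν l - quant ν t| < ε/4 := by
    have hd : dist l t < δ := by
      rw [Real.dist_eq, hl, show t - h0 - t = -h0 by ring, abs_neg, abs_of_pos hh]
      exact hδh
    have := hδball hd
    rwa [Real.dist_eq, hQkl, hQkt] at this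
  have htu : t ≤ u := by rw [hu]; linarith
  have hlt : l ≤ t := by rw [hl]; linarith
  have hut : u - t = h0 := by rw [hu]; ring
  have htl : t - l = h0 := by rw [hl]; ring
  have hIn : ∀ n, IntervalIntegrable (quant (μs n)) volume t u :=
    fun n => quant_intervalIntegrable (h n) ht0.le htu huc1.le
  have hIn' : ∀ n, IntervalIntegrable (quant (μs n)) volume l t :=
    fun n => quant_intervalIntegrable (h n) hl0.le hlt ht1.le
  have hIνu : IntervalIntegrable (quant ν) volume t u :=
    quant_intervalIntegrable hν ht0.le htu huc1.le
  have hIνl : IntervalIntegrable (quant ν) volume l t :=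
    quant_intervalIntegrable hν hl0.le hlt ht1.le
  have hup : ∀ n, h0 * quant (μs n) t ≤ ∫ s in t..u, quant (μs n) s := by
    intro n
    have := intervalIntegral.integral_mono_on htu (intervalIntegrable_const (c := quant (μs n) t))
      (hIn n) (fun x hx => quant_mono (h n) hx.1 (lt_of_le_of_lt hx.2 huc1))
    rwa [intervalIntegral.integral_const, hut, smul_eq_mul] at this
  have hdown : ∀ n, (∫ s in l..t, quant (μs n) s) ≤ h0 * quant (μs n) t := by
    intro n
    have := intervalIntegral.integral_mono_on hlt (hIn' n)
      (intervalIntegrable_const (c := quant (μs n) t))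
      (fun x hx => quant_mono (h n) hx.2 ht1)
    rwa [intervalIntegral.integral_const, htl, smul_eq_mul] at this
  have hνup : (∫ s in t..u, quant ν s) ≤ h0 * quant ν u := by
    have := intervalIntegral.integral_mono_on htu hIνu
      (intervalIntegrable_const (c := quant ν u))
      (fun x hx => quant_mono hν hx.2 huc1)
    rwa [intervalIntegral.integral_const, hut, smul_eq_mul] at this
  have hνdown : h0 * quant ν l ≤ ∫ s in l..t, quant ν s := by
    have := intervalIntegral.integral_mono_on hlt (intervalIntegrable_const (c := quant ν l))
      hIνl (fun x hx => quant_mono hν hx.1 (lt_of_le_of_lt hx.2 ht1))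
    rwa [intervalIntegral.integral_const, htl, smul_eq_mul] at this
  have hconv : ∀ s ∈ Icc (0:ℝ) 1, ∀ᶠ n in atTop,
      |(∫ r in (0:ℝ)..s, quant (μs n) r) - ∫ r in (0:ℝ)..s, quant ν r| < h0*ε/4 := by
    intro s hs
    have := Metric.tendsto_nhds.mp (hA s hs) (h0*ε/4) (by positivity)
    simpa [Real.dist_eq] using this
  have hmemu : u ∈ Icc (0:ℝ) 1 := ⟨by rw [hu]; linarith, huc1.le⟩
  have hmemt : t ∈ Icc (0:ℝ) 1 := ⟨ht0.le, ht1.le⟩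
  have hmeml : l ∈ Icc (0:ℝ) 1 := ⟨hl0.le, by rw [hl]; linarith⟩
  filter_upwards [hconv u hmemu, hconv t hmemt, hconv l hmeml] with n hFu hFt hFl
  have hI0t : IntervalIntegrable (quant (μs n)) volume 0 t :=
    quant_intervalIntegrable (h n) le_rfl ht0.le ht1.le
  have hI0l : IntervalIntegrable (quant (μs n)) volume 0 l :=
    quant_intervalIntegrable (h n) le_rfl hl0.le (by linarith)
  have hIν0t : IntervalIntegrable (quant ν) volume 0 t :=
    quant_intervalIntegrable hν le_rfl ht0.le ht1.le
  have hIν0l : IntervalIntegrable (quant ν) volume 0 l :=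
    quant_intervalIntegrable hν le_rfl hl0.le (by linarith)
  have adjn_u : (∫ r in (0:ℝ)..t, quant (μs n) r) + ∫ s in t..u, quant (μs n) s
      = ∫ r in (0:ℝ)..u, quant (μs n) r :=
    intervalIntegral.integral_add_adjacent_intervals hI0t (hIn n)
  have adjn_l : (∫ r in (0:ℝ)..l, quant (μs n) r) + ∫ s in l..t, quant (μs n) s
      = ∫ r in (0:ℝ)..t, quant (μs n) r :=
    intervalIntegral.integral_add_adjacent_intervals hI0l (hIn' n)
  have adjν_u : (∫ r in (0:ℝ)..t, quant ν r) + ∫ s in t..u, quant ν s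
      = ∫ r in (0:ℝ)..u, quant ν r :=
    intervalIntegral.integral_add_adjacent_intervals hIν0t hIνu
  have adjν_l : (∫ r in (0:ℝ)..l, quant ν r) + ∫ s in l..t, quant ν s
      = ∫ r in (0:ℝ)..t, quant ν r :=
    intervalIntegral.integral_add_adjacent_intervals hIν0l hIνl
  obtain ⟨hFu1, hFu2⟩ := abs_lt.mp hFu
  obtain ⟨hFt1, hFt2⟩ := abs_lt.mp hFt
  obtain ⟨hFl1, hFl2⟩ := abs_lt.mp hFl
  obtain ⟨hQu1, hQu2⟩ := abs_lt.mp hQu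
  obtain ⟨hQl1, hQl2⟩ := abs_lt.mp hQl
  have hmul1 : h0 * quant ν u ≤ h0 * quant ν t + h0 * ε/4 :=
    calc h0 * quant ν u ≤ h0 * (quant ν t + ε/4) :=
          mul_le_mul_of_nonneg_left (by linarith) hh.le
      _ = h0 * quant ν t + h0 * ε/4 := by ring
  have hmul2 : h0 * quant ν t - h0 * ε/4 ≤ h0 * quant ν l :=
    calc h0 * quant ν t - h0 * ε/4 = h0 * (quant ν t - ε/4) := by ring
      _ ≤ h0 * quant ν l := mul_le_mul_of_nonneg_left (by linarith) hh.le
  rw [Real.dist_eq, abs_lt]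
  constructor
  · have key : h0 * quant ν t - h0 * ε < h0 * quant (μs n) t := by
      linarith [hdown n, hνdown]
    have h2 : h0 * (quant ν t - ε) < h0 * quant (μs n) t := by
      calc h0 * (quant ν t - ε) = h0 * quant ν t - h0 * ε := by ring
        _ < h0 * quant (μs n) t := key
    have := (mul_lt_mul_iff_right₀ hh).mp h2
    linarith
  · have key : h0 * quant (μs n) t < h0 * quant ν t + h0 * ε := by
      linarith [hup n, hνup]
    have h2 : h0 * quant (μs n) t < h0 * (quant ν t + ε) := by
      calc h0 * quant (μs n) t < h0 * quant ν t + h0 * ε := key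
        _ = h0 * (quant ν t + ε) := by ring
    have := (mul_lt_mul_iff_right₀ hh).mp h2
    linarith

end Aux6

section Aux7

theorem pointwise_to_W1 (μs : ℕ → Measure ℝ) (ν : Measure ℝ) (h : ∀ n, MemM (μs n)) (hν : MemM ν)
    (hlor : ∀ p ∈ Icc (0:ℝ) 1, Tendsto (fun n => lorenz (μs n) p) atTop (𝓝 (lorenz ν p)))
    (hmean : Tendsto (fun n => mMean (μs n)) atTop (𝓝 (mMean ν))) :
    Tendsto (fun n => W1 (μs n) ν) atTop (𝓝 0) := by
  have hA := lorenz_to_A μs ν h hν hlor hmean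
  have hae := quant_tendsto_ae μs ν h hν hA
  -- minima
  set g : ℕ → ℝ → ℝ := fun n t => min (quant (μs n) t) (quant ν t) with hg
  have hg_meas : ∀ n, AEStronglyMeasurable (g n) (volume.restrict (Ioo (0:ℝ) 1)) :=
    fun n => ((quant_aemeasurable (h n)).min (quant_aemeasurable hν)).aestronglyMeasurable
  have hg_bound : ∀ n, ∀ᵐ t ∂(volume.restrict (Ioo (0:ℝ) 1)), ‖g n t‖ ≤ quant ν t := by
    intro n
    apply Eventually.of_forall
    intro t
    rw [Real.norm_eq_abs, abs_of_nonneg (le_min (quant_nonneg t) (quant_nonneg t))]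
    exact min_le_right _ _
  have hg_tend : ∀ᵐ t ∂(volume.restrict (Ioo (0:ℝ) 1)),
      Tendsto (fun n => g n t) atTop (𝓝 (quant ν t)) := by
    filter_upwards [hae] with t ht
    have := ht.min (tendsto_const_nhds (x := quant ν t) (f := atTop))
    simpa using this
  have hI : Tendsto (fun n => ∫ t in Ioo (0:ℝ) 1, g n t) atTop
      (𝓝 (∫ t in Ioo (0:ℝ) 1, quant ν t)) :=
    tendsto_integral_of_dominated_convergence (quant ν) hg_meas (quant_integrableOn hν)
      hg_bound hg_tend
  -- integrability of g n
  have hg_int : ∀ n, IntegrableOn (g n) (Ioo (0:ℝ) 1) := by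
    intro n
    refine ⟨hg_meas n, ?_⟩
    apply HasFiniteIntegral.mono' (quant_integrableOn hν).hasFiniteIntegral (hg_bound n)
  -- identity
  have hW1eq : ∀ n, W1 (μs n) ν = mMean (μs n) + mMean ν - 2 * ∫ t in Ioo (0:ℝ) 1, g n t := by
    intro n
    rw [W1_eq_setIntegral]
    have hpt : ∀ t, |quant (μs n) t - quant ν t|
        = quant (μs n) t + quant ν t - 2 * g n t := by
      intro t
      rcases le_total (quant (μs n) t) (quant ν t) with hle | hle
      · rw [abs_of_nonpos (by linarith), hg]
        simp only [min_eq_left hle]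
        ring
      · rw [abs_of_nonneg (by linarith), hg]
        simp only [min_eq_right hle]
        ring
    rw [integral_congr_ae (Eventually.of_forall (fun t => hpt t))]
    have h1 : IntegrableOn (fun t => quant (μs n) t + quant ν t) (Ioo (0:ℝ) 1) := by
      exact (quant_integrableOn (h n)).add (quant_integrableOn hν)
    have h2 : IntegrableOn (fun t => 2 * g n t) (Ioo (0:ℝ) 1) := by
      exact (hg_int n).const_mul 2
    rw [integral_sub h1 h2, integral_add (quant_integrableOn (h n)) (quant_integrableOn hν),
      MeasureTheory.integral_const_mul, setIntegral_quant_eq_mean (h n), setIntegral_quant_eq_mean hν]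
  have hfinal : Tendsto (fun n => mMean (μs n) + mMean ν - 2 * ∫ t in Ioo (0:ℝ) 1, g n t)
      atTop (𝓝 (mMean ν + mMean ν - 2 * mMean ν)) := by
    apply Tendsto.sub
    · exact hmean.add tendsto_const_nhds
    · have := hI.const_mul 2
      rwa [setIntegral_quant_eq_mean hν] at this
  have hz : mMean ν + mMean ν - 2 * mMean ν = 0 := by ring
  rw [hz] at hfinal
  exact hfinal.congr (fun n => (hW1eq n).symm)

end Aux7

/-- For `μ_n, μ_∞ ∈ 𝐌`: `W₁(μ_n,μ_∞) → 0` iff (pointwise convergence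
of Lorenz functions on `[0,1]` and convergence of means) iff (uniform convergence of
Lorenz functions on `[0,1]` and convergence of means). -/
theorem W1_tendsto_iff_lorenz_conv (μs : ℕ → Measure ℝ) (ν : Measure ℝ)
    (h : ∀ n, MemM (μs n)) (hν : MemM ν) :
    (Tendsto (fun n => W1 (μs n) ν) atTop (𝓝 0) ↔
      ((∀ p ∈ Set.Icc (0:ℝ) 1, Tendsto (fun n => lorenz (μs n) p) atTop (𝓝 (lorenz ν p))) ∧
        Tendsto (fun n => mMean (μs n)) atTop (𝓝 (mMean ν)))) ∧
    (Tendsto (fun n => W1 (μs n) ν) atTop (𝓝 0) ↔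
      (TendstoUniformlyOn (fun n p => lorenz (μs n) p) (lorenz ν) atTop (Set.Icc 0 1) ∧
        Tendsto (fun n => mMean (μs n)) atTop (𝓝 (mMean ν)))) := by
  constructor
  · constructor
    · intro hw
      exact ⟨fun p hp => (W1_to_uniform μs ν h hν hw).tendsto_at hp, W1_to_means μs ν h hν hw⟩
    · rintro ⟨hlor, hmean⟩
      exact pointwise_to_W1 μs ν h hν hlor hmean
  · constructor
    · intro hw
      exact ⟨W1_to_uniform μs ν h hν hw, W1_to_means μs ν h hν hw⟩
    · rintro ⟨hu, hmean⟩
      exact pointwise_to_W1 μs ν h hν (fun p hp => hu.tendsto_at hp) hmean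
end

section
/- Let I ⊆ ℝ be an open interval and let F_n : I → ℝ (n ∈ ℕ) be convex functions converging uniformly on I to a function F_∞. Then F_∞ is convex, and at every point x ∈ I at which the left-derivative function of F_∞ is continuous, one has ∂₋F_n(x) → ∂₋F_∞(x) as n → ∞. -/
open MeasureTheory Filter Topology

open Set

private lemma aux_exists_leftDeriv {I : Set ℝ} {f : ℝ → ℝ} (hI : IsOpen I)
    (hf : ConvexOn ℝ I f) {x : ℝ} (hx : x ∈ I) :
    ∃ d, HasDerivWithinAt f d (Set.Iio x) x := by
  obtain ⟨a, haI, hax⟩ : ∃ a, a ∈ I ∧ a < x :=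
    (((hI.eventually_mem hx).filter_mono (nhdsWithin_le_nhds (s := Iio x))).and
      self_mem_nhdsWithin).exists
  obtain ⟨z, hzI, hxz⟩ : ∃ z, z ∈ I ∧ x < z :=
    (((hI.eventually_mem hx).filter_mono (nhdsWithin_le_nhds (s := Ioi x))).and
      self_mem_nhdsWithin).exists
  have hsub : Ioo a x ⊆ I := fun t ht => hf.1.ordConnected.out haI hx ⟨ht.1.le, ht.2.le⟩
  have hmono : MonotoneOn (slope f x) (Ioo a x) := by
    intro u hu v hv huv
    rw [slope_def_field, slope_def_field]
    exact hf.secant_mono hx (hsub hu) (hsub hv) hu.2.ne hv.2.ne huv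
  have hbdd : BddAbove (slope f x '' Ioo a x) := by
    refine ⟨slope f x z, ?_⟩
    rintro _ ⟨u, hu, rfl⟩
    rw [slope_def_field, slope_def_field]
    exact hf.secant_mono hx (hsub hu) hzI hu.2.ne hxz.ne' (hu.2.le.trans hxz.le)
  refine ⟨sSup (slope f x '' Ioo a x), ?_⟩
  rw [hasDerivWithinAt_iff_tendsto_slope' notMem_Iio_self]
  exact hmono.tendsto_nhdsWithin_Ioo_left ⟨(a + x) / 2, by constructor <;> linarith⟩ hbdd

private lemma aux_hasDeriv {I : Set ℝ} {f : ℝ → ℝ} (hI : IsOpen I)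
    (hf : ConvexOn ℝ I f) {x : ℝ} (hx : x ∈ I) :
    HasDerivWithinAt f (derivWithin f (Set.Iio x) x) (Set.Iio x) x := by
  obtain ⟨d, hd⟩ := aux_exists_leftDeriv hI hf hx
  rwa [hd.derivWithin (uniqueDiffWithinAt_Iio x)]

private lemma aux_leftDeriv_le_slope {I : Set ℝ} {f : ℝ → ℝ} (hI : IsOpen I)
    (hf : ConvexOn ℝ I f) {x z : ℝ} (hx : x ∈ I) (hz : z ∈ I) (hxz : x < z) {d : ℝ}
    (hd : HasDerivWithinAt f d (Set.Iio x) x) : d ≤ slope f x z := by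
  have ht := (hasDerivWithinAt_iff_tendsto_slope' notMem_Iio_self).1 hd
  refine le_of_tendsto ht ?_
  filter_upwards [((hI.eventually_mem hx).filter_mono (nhdsWithin_le_nhds (s := Iio x))),
    self_mem_nhdsWithin] with y hyI (hyx : y < x)
  rw [slope_comm f x y, slope_def_field, slope_def_field]
  exact hf.slope_mono_adjacent hyI hz hyx hxz


/-- If convex functions `F_n` converge uniformly on an open interval `I`
to `F_∞`, then `F_∞` is convex and the left derivatives converge at every point where the
left-derivative function of `F_∞` is continuous. -/
theorem leftDeriv_tendsto_of_tendstoUniformlyOn_convexOn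
    (I : Set ℝ) (hI : IsOpen I) (hIconv : Convex ℝ I)
    (F : ℕ → ℝ → ℝ) (Flim : ℝ → ℝ)
    (hconv : ∀ n, ConvexOn ℝ I (F n))
    (hunif : TendstoUniformlyOn F Flim atTop I) :
    ConvexOn ℝ I Flim ∧
    ∀ x ∈ I, ContinuousAt (fun y => derivWithin Flim (Set.Iio y) y) x →
      Tendsto (fun n => derivWithin (F n) (Set.Iio x) x) atTop
        (𝓝 (derivWithin Flim (Set.Iio x) x)) := by
  have hpt : ∀ x ∈ I, Tendsto (fun n => F n x) atTop (𝓝 (Flim x)) := fun x hx =>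
    hunif.tendsto_at hx
  have Fc : ConvexOn ℝ I Flim := by
    refine ⟨hIconv, fun x hx y hy a b ha hb hab => ?_⟩
    have hm : a • x + b • y ∈ I := hIconv hx hy ha hb hab
    refine le_of_tendsto_of_tendsto' (hpt _ hm) ?_ fun n => (hconv n).2 hx hy ha hb hab
    simpa only [smul_eq_mul] using
      (((hpt x hx).const_mul a).add ((hpt y hy).const_mul b))
  refine ⟨Fc, fun x hx hcont => ?_⟩
  set D : ℝ → ℝ := fun y => derivWithin Flim (Set.Iio y) y with hD
  have hdlim : HasDerivWithinAt Flim (D x) (Set.Iio x) x := aux_hasDeriv hI Fc hx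
  have hFd : ∀ n, HasDerivWithinAt (F n) (derivWithin (F n) (Set.Iio x) x) (Set.Iio x) x :=
    fun n => aux_hasDeriv hI (hconv n) hx
  have hslope : ∀ u v, u ∈ I → v ∈ I →
      Tendsto (fun n => slope (F n) u v) atTop (𝓝 (slope Flim u v)) := by
    intro u v hu hv
    simp only [slope_def_field]
    exact ((hpt v hv).sub (hpt u hu)).div_const _
  rw [tendsto_order]
  constructor
  · -- lower bound: l < D x eventually l < deriv
    intro l hl
    have ht := (hasDerivWithinAt_iff_tendsto_slope' notMem_Iio_self).1 hdlim
    obtain ⟨y, hyI, hls, hyx⟩ :=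
      (((hI.eventually_mem hx).filter_mono (nhdsWithin_le_nhds (s := Iio x))).and
        ((ht.eventually (eventually_gt_nhds hl)).and self_mem_nhdsWithin)).exists
    have hyx' : y < x := hyx
    have hls' : l < slope Flim y x := by rwa [slope_comm] at hls
    filter_upwards [(hslope y x hyI hx).eventually (eventually_gt_nhds hls')] with n hn
    exact hn.trans_le <|
      (hconv n).slope_le_of_hasDerivWithinAt_Iio hyI hx hyx' (hFd n)
  · -- upper bound
    intro u hu
    have hmid : D x < (D x + u) / 2 := by linarith
    have hev : ∀ᶠ y in 𝓝 x, D y < (D x + u) / 2 := hcont (Iio_mem_nhds hmid)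
    obtain ⟨z, ⟨hzI, hzD⟩, hxz⟩ :=
      (((hI.eventually_mem hx).and hev).filter_mono (nhdsWithin_le_nhds (s := Ioi x))).and
        self_mem_nhdsWithin |>.exists
    have hxz' : x < z := hxz
    have hsz : slope Flim x z < u := by
      have h1 : slope Flim x z ≤ D z :=
        Fc.slope_le_of_hasDerivWithinAt_Iio hx hzI hxz' (aux_hasDeriv hI Fc hzI)
      linarith
    filter_upwards [(hslope x z hx hzI).eventually (eventually_lt_nhds hsz)] with n hn
    exact lt_of_le_of_lt (aux_leftDeriv_le_slope hI (hconv n) hx hzI hxz' (hFd n)) hn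
end
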